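/- Let K be a measurable space, p ≥ 1 a natural number, and Z^{i,j} : K → ℝ (i, j ∈ ℕ) measurable functions such that for every x ∈ K: Z^{i,j}(x) = Z^{j,i}(x) for all i, j; for every N the matrix (Z^{i,j}(x))_{i,j<N} is positive semidefinite; and p(x) := sup_N rank (Z^{i,j}(x))_{i,j<N} ≤ p. For u, v finitely supported real sequences write ⟨u, v⟩_{Z(x)} := Σ_{i,j} Z^{i,j}(x) u_i v_j. Then there exist functions g^{(1)}, …, g^{(p)} from K to the space of finitely supported real sequences, with each coordinate function x ↦ g^{(k)}_i(x) measurable, such that for every x ∈ K: ⟨g^{(k)}(x), g^{(l)}(x)⟩_{Z(x)} = 0 whenever k ≠ l, and ⟨g^{(k)}(x), g^{(k)}(x)⟩_{Z(x)} = 1 if k ≤ p(x) and = 0 if k > p(x). -/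

import Mathlib

/-- The pre-inner product `⟨u, v⟩_{Z(x)} = Σ_{i,j} Z^{i,j}(x) u_i v_j` on finitely supported
real sequences. -/
noncomputable def innerZ {K : Type*} (Z : ℕ → ℕ → K → ℝ) (x : K) (u v : ℕ →₀ ℝ) : ℝ :=
  ∑ i ∈ u.support, ∑ j ∈ v.support, Z i j x * u i * v j

namespace Stmt17Aux

open Finset Matrix

variable {K : Type*}

lemma innerZ_eq (Z : ℕ → ℕ → K → ℝ) (x : K) (u v : ℕ →₀ ℝ) {s t : Finset ℕ}
    (hu : u.support ⊆ s) (hv : v.support ⊆ t) :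
    innerZ Z x u v = ∑ i ∈ s, ∑ j ∈ t, Z i j x * u i * v j := by
  unfold innerZ
  rw [Finset.sum_subset hu (fun i _ hi => Finset.sum_eq_zero fun j _ => by
    rw [Finsupp.notMem_support_iff.mp hi, mul_zero, zero_mul])]
  exact Finset.sum_congr rfl fun i _ =>
    Finset.sum_subset hv fun j _ hj => by
      rw [Finsupp.notMem_support_iff.mp hj, mul_zero]

lemma innerZ_zero_left (Z : ℕ → ℕ → K → ℝ) (x : K) (v : ℕ →₀ ℝ) :
    innerZ Z x 0 v = 0 := by simp [innerZ]

lemma innerZ_zero_right (Z : ℕ → ℕ → K → ℝ) (x : K) (u : ℕ →₀ ℝ) :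
    innerZ Z x u 0 = 0 := by simp [innerZ]

lemma innerZ_add_left (Z : ℕ → ℕ → K → ℝ) (x : K) (u u' v : ℕ →₀ ℝ) :
    innerZ Z x (u + u') v = innerZ Z x u v + innerZ Z x u' v := by
  rw [innerZ_eq Z x (u + u') v (s := u.support ∪ u'.support) Finsupp.support_add subset_rfl,
    innerZ_eq Z x u v (s := u.support ∪ u'.support) subset_union_left subset_rfl,
    innerZ_eq Z x u' v (s := u.support ∪ u'.support) subset_union_right subset_rfl,
    ← Finset.sum_add_distrib]
  refine Finset.sum_congr rfl fun i _ => ?_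
  rw [← Finset.sum_add_distrib]
  refine Finset.sum_congr rfl fun j _ => ?_
  simp only [Finsupp.add_apply]
  ring

lemma innerZ_smul_left (Z : ℕ → ℕ → K → ℝ) (x : K) (c : ℝ) (u v : ℕ →₀ ℝ) :
    innerZ Z x (c • u) v = c * innerZ Z x u v := by
  rw [innerZ_eq Z x (c • u) v (s := u.support) Finsupp.support_smul subset_rfl,
    innerZ_eq Z x u v (s := u.support) subset_rfl subset_rfl, Finset.mul_sum]
  refine Finset.sum_congr rfl fun i _ => ?_
  rw [Finset.mul_sum]
  refine Finset.sum_congr rfl fun j _ => ?_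
  simp only [Finsupp.smul_apply, smul_eq_mul]
  ring

lemma innerZ_sub_left (Z : ℕ → ℕ → K → ℝ) (x : K) (u u' v : ℕ →₀ ℝ) :
    innerZ Z x (u - u') v = innerZ Z x u v - innerZ Z x u' v := by
  classical
  rw [innerZ_eq Z x (u - u') v (s := u.support ∪ u'.support) Finsupp.support_sub subset_rfl,
    innerZ_eq Z x u v (s := u.support ∪ u'.support) subset_union_left subset_rfl,
    innerZ_eq Z x u' v (s := u.support ∪ u'.support) subset_union_right subset_rfl,
    ← Finset.sum_sub_distrib]
  refine Finset.sum_congr rfl fun i _ => ?_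
  rw [← Finset.sum_sub_distrib]
  refine Finset.sum_congr rfl fun j _ => ?_
  simp only [Finsupp.sub_apply]
  ring

lemma innerZ_sum_left {α : Type*} (Z : ℕ → ℕ → K → ℝ) (x : K) (s : Finset α)
    (f : α → (ℕ →₀ ℝ)) (v : ℕ →₀ ℝ) :
    innerZ Z x (∑ a ∈ s, f a) v = ∑ a ∈ s, innerZ Z x (f a) v := by
  classical
  induction s using Finset.induction with
  | empty => simp [innerZ_zero_left]
  | insert a s h ih =>
    rw [Finset.sum_insert h, Finset.sum_insert h, innerZ_add_left, ih]

lemma innerZ_comm (Z : ℕ → ℕ → K → ℝ) (x : K) (hs : ∀ i j, Z i j x = Z j i x)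
    (u v : ℕ →₀ ℝ) : innerZ Z x u v = innerZ Z x v u := by
  unfold innerZ
  rw [Finset.sum_comm]
  exact Finset.sum_congr rfl fun j _ => Finset.sum_congr rfl fun i _ => by
    rw [hs i j]; ring

lemma innerZ_smul_right (Z : ℕ → ℕ → K → ℝ) (x : K) (hs : ∀ i j, Z i j x = Z j i x)
    (c : ℝ) (u v : ℕ →₀ ℝ) : innerZ Z x u (c • v) = c * innerZ Z x u v := by
  rw [innerZ_comm Z x hs, innerZ_smul_left, innerZ_comm Z x hs]

lemma innerZ_add_right (Z : ℕ → ℕ → K → ℝ) (x : K) (hs : ∀ i j, Z i j x = Z j i x)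
    (u v v' : ℕ →₀ ℝ) : innerZ Z x u (v + v') = innerZ Z x u v + innerZ Z x u v' := by
  rw [innerZ_comm Z x hs, innerZ_add_left, innerZ_comm Z x hs v u, innerZ_comm Z x hs v' u]

lemma innerZ_self_nonneg (Z : ℕ → ℕ → K → ℝ) (x : K)
    (hpsd : ∀ N : ℕ, (Matrix.of fun i j : Fin N => Z i j x).PosSemidef) (u : ℕ →₀ ℝ) :
    0 ≤ innerZ Z x u u := by
  obtain ⟨N, hN⟩ : ∃ N, u.support ⊆ Finset.range N :=
    ⟨u.support.sup id + 1, fun i hi =>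
      Finset.mem_range.mpr (Nat.lt_succ_of_le (Finset.le_sup (f := id) hi))⟩
  have h := (hpsd N).dotProduct_mulVec_nonneg (fun i => u i)
  rw [innerZ_eq Z x u u hN hN]
  refine le_trans h (le_of_eq ?_)
  have conv : ∀ g : ℕ → ℕ → ℝ,
      ∑ k : Fin N, ∑ l : Fin N, g k l = ∑ k ∈ Finset.range N, ∑ l ∈ Finset.range N, g k l := by
    intro g
    rw [← Fin.sum_univ_eq_sum_range (fun k => ∑ l ∈ Finset.range N, g k l) N]
    exact Finset.sum_congr rfl fun k _ => Fin.sum_univ_eq_sum_range (g k) N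
  rw [← conv fun k l => Z k l x * u k * u l]
  simp only [dotProduct, Matrix.mulVec, Pi.star_apply, star_trivial, Matrix.of_apply,
    dotProduct]
  refine Finset.sum_congr rfl fun k _ => ?_
  rw [Finset.mul_sum]
  exact Finset.sum_congr rfl fun l _ => by ring

lemma innerZ_degenerate (Z : ℕ → ℕ → K → ℝ) (x : K)
    (hs : ∀ i j, Z i j x = Z j i x)
    (hpsd : ∀ N : ℕ, (Matrix.of fun i j : Fin N => Z i j x).PosSemidef)
    (u w : ℕ →₀ ℝ) (hw : innerZ Z x w w = 0) : innerZ Z x u w = 0 := by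
  by_contra ha
  have h := innerZ_self_nonneg Z x hpsd
    (u + (-(innerZ Z x u u + 1) / (2 * innerZ Z x u w)) • w)
  set t : ℝ := -(innerZ Z x u u + 1) / (2 * innerZ Z x u w) with ht
  simp only [innerZ_add_left, innerZ_add_right Z x hs, innerZ_smul_left,
    innerZ_smul_right Z x hs, hw, innerZ_comm Z x hs w u, mul_zero, add_zero] at h
  have hta : t * innerZ Z x u w = -(innerZ Z x u u + 1) / 2 := by
    rw [ht]; field_simp
  linarith

/-- Gram--Schmidt sequence applied to the standard basis vectors, keeping zero remainders. -/
noncomputable def gs (Z : ℕ → ℕ → K → ℝ) (x : K) : ℕ → (ℕ →₀ ℝ)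
  | n =>
    Finsupp.single n 1 -
      ∑ j ∈ (Finset.range n).attach,
        (if innerZ Z x (gs Z x j.1) (gs Z x j.1) = 0 then (0 : ℝ)
         else innerZ Z x (Finsupp.single n 1) (gs Z x j.1) /
              innerZ Z x (gs Z x j.1) (gs Z x j.1)) • gs Z x j.1
  termination_by n => n
  decreasing_by exact Finset.mem_range.mp j.2

lemma gs_def (Z : ℕ → ℕ → K → ℝ) (x : K) (n : ℕ) :
    gs Z x n =
      Finsupp.single n 1 -
        ∑ j ∈ (Finset.range n).attach,
          (if innerZ Z x (gs Z x j.1) (gs Z x j.1) = 0 then (0 : ℝ)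
           else innerZ Z x (Finsupp.single n 1) (gs Z x j.1) /
                innerZ Z x (gs Z x j.1) (gs Z x j.1)) • gs Z x j.1 := by
  rw [gs]

lemma gs_support (Z : ℕ → ℕ → K → ℝ) (x : K) (n : ℕ) :
    (gs Z x n).support ⊆ Finset.range (n + 1) := by
  induction n using Nat.strong_induction_on with
  | _ n ih =>
    rw [gs_def]
    refine Finsupp.support_sub.trans (Finset.union_subset ?_ ?_)
    · exact Finsupp.support_single_subset.trans
        (Finset.singleton_subset_iff.mpr (Finset.self_mem_range_succ n))
    · refine Finsupp.support_finset_sum.trans ?_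
      intro i hi
      rw [Finset.mem_biUnion] at hi
      obtain ⟨j, _, hj⟩ := hi
      have hjn : j.1 < n := Finset.mem_range.mp j.2
      have := Finsupp.support_smul.trans (ih j.1 hjn) hj
      exact Finset.mem_range.mpr (lt_trans (Finset.mem_range.mp this) (Nat.succ_lt_succ hjn))

lemma gs_apply_of_lt (Z : ℕ → ℕ → K → ℝ) (x : K) {n i : ℕ} (h : n < i) :
    gs Z x n i = 0 := by
  by_contra h0
  have := gs_support Z x n (Finsupp.mem_support_iff.mpr h0)
  exact absurd (Finset.mem_range.mp this) (by omega)

lemma gs_apply_self (Z : ℕ → ℕ → K → ℝ) (x : K) (n : ℕ) : gs Z x n n = 1 := by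
  rw [gs_def]
  rw [Finsupp.sub_apply, Finset.sum_apply']
  have : ∀ j ∈ (Finset.range n).attach,
      ((if innerZ Z x (gs Z x j.1) (gs Z x j.1) = 0 then (0 : ℝ)
        else innerZ Z x (Finsupp.single n 1) (gs Z x j.1) /
             innerZ Z x (gs Z x j.1) (gs Z x j.1)) • gs Z x j.1) n = 0 := by
    intro j _
    rw [Finsupp.smul_apply, gs_apply_of_lt Z x (Finset.mem_range.mp j.2), smul_zero]
  rw [Finset.sum_congr rfl this, Finset.sum_const_zero, Finsupp.single_eq_same, sub_zero]

lemma gs_orth (Z : ℕ → ℕ → K → ℝ) (x : K)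
    (hs : ∀ i j, Z i j x = Z j i x)
    (hpsd : ∀ N : ℕ, (Matrix.of fun i j : Fin N => Z i j x).PosSemidef) :
    ∀ n j, j < n → innerZ Z x (gs Z x n) (gs Z x j) = 0 := by
  intro n
  induction n using Nat.strong_induction_on with
  | _ n ih =>
    intro j hjn
    rw [gs_def Z x n, innerZ_sub_left, innerZ_sum_left]
    have hterm : ∀ k ∈ (Finset.range n).attach, k.1 ≠ j →
        innerZ Z x ((if innerZ Z x (gs Z x k.1) (gs Z x k.1) = 0 then (0 : ℝ)
          else innerZ Z x (Finsupp.single n 1) (gs Z x k.1) /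
               innerZ Z x (gs Z x k.1) (gs Z x k.1)) • gs Z x k.1) (gs Z x j) = 0 := by
      intro k _ hkj
      rw [innerZ_smul_left]
      have hk : k.1 < n := Finset.mem_range.mp k.2
      rcases lt_or_gt_of_ne hkj with h | h
      · rw [innerZ_comm Z x hs (gs Z x k.1) (gs Z x j), ih j hjn k.1 h, mul_zero]
      · rw [ih k.1 hk j h, mul_zero]
    have hj' : (⟨j, Finset.mem_range.mpr hjn⟩ : {y // y ∈ Finset.range n}) ∈
        (Finset.range n).attach := Finset.mem_attach _ _
    rw [Finset.sum_eq_single_of_mem _ hj' (fun k hk hne => hterm k hk (by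
      simpa [Subtype.ext_iff] using hne))]
    rw [innerZ_smul_left]
    by_cases hq : innerZ Z x (gs Z x j) (gs Z x j) = 0
    · rw [if_pos hq, zero_mul, innerZ_degenerate Z x hs hpsd _ _ hq, sub_zero]
    · rw [if_neg hq, div_mul_cancel₀ _ hq, sub_self]

lemma fin_double_sum (N : ℕ) (g : ℕ → ℕ → ℝ) :
    ∑ k : Fin N, ∑ l : Fin N, g k l = ∑ k ∈ Finset.range N, ∑ l ∈ Finset.range N, g k l := by
  rw [← Fin.sum_univ_eq_sum_range (fun k => ∑ l ∈ Finset.range N, g k l) N]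
  exact Finset.sum_congr rfl fun k _ => Fin.sum_univ_eq_sum_range (g k) N

/-- Squared norm of the `n`-th Gram–Schmidt vector. -/
noncomputable def qZ (Z : ℕ → ℕ → K → ℝ) (x : K) (n : ℕ) : ℝ :=
  innerZ Z x (gs Z x n) (gs Z x n)

open scoped Classical in
/-- Number of nonvanishing Gram–Schmidt vectors among the first `N`. -/
noncomputable def FZ (Z : ℕ → ℕ → K → ℝ) (x : K) (N : ℕ) : ℕ :=
  ((Finset.range N).filter fun i => qZ Z x i ≠ 0).card

lemma rank_eq (Z : ℕ → ℕ → K → ℝ) (x : K)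
    (hs : ∀ i j, Z i j x = Z j i x)
    (hpsd : ∀ N : ℕ, (Matrix.of fun i j : Fin N => Z i j x).PosSemidef) (N : ℕ) :
    (Matrix.of fun i j : Fin N => Z i j x).rank = FZ Z x N := by
  classical
  set M : Matrix (Fin N) (Fin N) ℝ := Matrix.of fun i j : Fin N => Z i j x with hM
  set T : Matrix (Fin N) (Fin N) ℝ := Matrix.of fun i j : Fin N => gs Z x i.1 j.1 with hT
  have hTlow : T.BlockTriangular OrderDual.toDual := by
    intro i j hij
    exact gs_apply_of_lt Z x (show (i : ℕ) < (j : ℕ) from hij)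
  have hTdet : T.det = 1 := by
    rw [Matrix.det_of_lowerTriangular T hTlow]
    simp [hT, gs_apply_self]
  have entry : ∀ i j : Fin N, (T * M * Tᵀ) i j = innerZ Z x (gs Z x i.1) (gs Z x j.1) := by
    intro i j
    have hsupi : (gs Z x i.1).support ⊆ Finset.range N :=
      (gs_support Z x i.1).trans (Finset.range_subset_range.mpr i.isLt)
    have hsupj : (gs Z x j.1).support ⊆ Finset.range N :=
      (gs_support Z x j.1).trans (Finset.range_subset_range.mpr j.isLt)
    rw [innerZ_eq Z x _ _ hsupi hsupj,
      ← fin_double_sum N fun k l => Z k l x * gs Z x i.1 k * gs Z x j.1 l]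
    simp only [Matrix.mul_apply, Matrix.transpose_apply, hT, hM, Matrix.of_apply,
      Finset.sum_mul]
    rw [Finset.sum_comm]
    exact Finset.sum_congr rfl fun k _ => Finset.sum_congr rfl fun l _ => by ring
  have key : T * M * Tᵀ = Matrix.diagonal fun i : Fin N => qZ Z x i.1 := by
    ext i j
    by_cases hij : i = j
    · subst hij; rw [entry, Matrix.diagonal_apply_eq]; rfl
    · rw [entry, Matrix.diagonal_apply_ne _ hij]
      have hij' : (i : ℕ) ≠ (j : ℕ) := fun h => hij (Fin.ext h)
      rcases lt_or_gt_of_ne hij' with h | h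
      · rw [innerZ_comm Z x hs]; exact gs_orth Z x hs hpsd j.1 i.1 h
      · exact gs_orth Z x hs hpsd i.1 j.1 h
  have hrk : (T * M * Tᵀ).rank = M.rank := by
    rw [Matrix.rank_mul_eq_left_of_isUnit_det Tᵀ (T * M)
        (by rw [Matrix.det_transpose, hTdet]; exact isUnit_one),
      Matrix.rank_mul_eq_right_of_isUnit_det T M (by rw [hTdet]; exact isUnit_one)]
  rw [← hrk, key, Matrix.rank_diagonal, Fintype.card_subtype]
  unfold FZ
  rw [Finset.card_filter, Finset.card_filter,
    ← Fin.sum_univ_eq_sum_range (fun i => if qZ Z x i ≠ 0 then 1 else 0) N]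

lemma FZ_zero (Z : ℕ → ℕ → K → ℝ) (x : K) : FZ Z x 0 = 0 := by simp [FZ]

lemma FZ_succ (Z : ℕ → ℕ → K → ℝ) (x : K) (m : ℕ) :
    FZ Z x (m + 1) = FZ Z x m + if qZ Z x m ≠ 0 then 1 else 0 := by
  classical
  unfold FZ
  rw [Finset.range_add_one, Finset.filter_insert]
  by_cases h : qZ Z x m ≠ 0
  · rw [if_pos h, if_pos h, Finset.card_insert_of_notMem (by simp)]
  · rw [if_neg h, if_neg h, add_zero]

lemma exists_FZ_eq (Z : ℕ → ℕ → K → ℝ) (x : K) (k N : ℕ) (h : k < FZ Z x N) :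
    ∃ m, qZ Z x m ≠ 0 ∧ FZ Z x m = k := by
  induction N with
  | zero => rw [FZ_zero] at h; omega
  | succ N ihN =>
    by_cases hk : k < FZ Z x N
    · exact ihN hk
    · push_neg at hk
      rw [FZ_succ] at h
      by_cases hq : qZ Z x N ≠ 0
      · rw [if_pos hq] at h
        exact ⟨N, hq, by omega⟩
      · rw [if_neg hq] at h; omega

section Measurability

variable [MeasurableSpace K]

lemma innerZ_measurable_aux (Z : ℕ → ℕ → K → ℝ) (hmeas : ∀ i j, Measurable (Z i j))
    {f g : K → ℕ →₀ ℝ} {a b : ℕ}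
    (hfs : ∀ x, (f x).support ⊆ Finset.range a) (hgs : ∀ x, (g x).support ⊆ Finset.range b)
    (hf : ∀ i, Measurable fun x => f x i) (hg : ∀ j, Measurable fun x => g x j) :
    Measurable fun x => innerZ Z x (f x) (g x) := by
  have h : (fun x => innerZ Z x (f x) (g x)) =
      fun x => ∑ i ∈ Finset.range a, ∑ j ∈ Finset.range b, Z i j x * f x i * g x j :=
    funext fun x => innerZ_eq Z x (f x) (g x) (hfs x) (hgs x)
  rw [h]
  exact Finset.measurable_sum _ fun i _ => Finset.measurable_sum _ fun j _ =>
    ((hmeas i j).mul (hf i)).mul (hg j)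

lemma gs_measurable (Z : ℕ → ℕ → K → ℝ) (hmeas : ∀ i j, Measurable (Z i j)) :
    ∀ n i, Measurable fun x => gs Z x n i := by
  intro n
  induction n using Nat.strong_induction_on with
  | _ n ih =>
    intro i
    have hq : ∀ j < n, Measurable fun x => innerZ Z x (gs Z x j) (gs Z x j) := fun j hj =>
      innerZ_measurable_aux Z hmeas (fun x => gs_support Z x j) (fun x => gs_support Z x j)
        (ih j hj) (ih j hj)
    have hnum : ∀ j < n, Measurable fun x => innerZ Z x (Finsupp.single n 1) (gs Z x j) :=
      fun j hj =>
      innerZ_measurable_aux Z hmeas (a := n + 1)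
        (fun _ => Finsupp.support_single_subset.trans
          (Finset.singleton_subset_iff.mpr (Finset.self_mem_range_succ n)))
        (fun x => gs_support Z x j) (fun _ => measurable_const) (ih j hj)
    have hrw : (fun x => gs Z x n i) = fun x =>
        (Finsupp.single n (1 : ℝ)) i - ∑ j ∈ (Finset.range n).attach,
          (if innerZ Z x (gs Z x j.1) (gs Z x j.1) = 0 then (0 : ℝ)
           else innerZ Z x (Finsupp.single n 1) (gs Z x j.1) /
                innerZ Z x (gs Z x j.1) (gs Z x j.1)) * gs Z x j.1 i := by
      funext x
      rw [gs_def Z x n, Finsupp.sub_apply, Finset.sum_apply']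
      simp only [Finsupp.smul_apply, smul_eq_mul]
    rw [hrw]
    refine Measurable.sub measurable_const (Finset.measurable_sum _ fun j _ => ?_)
    have hj : j.1 < n := Finset.mem_range.mp j.2
    refine Measurable.mul ?_ (ih j.1 hj i)
    exact Measurable.ite ((hq j.1 hj) (measurableSet_singleton 0)) measurable_const
      ((hnum j.1 hj).div (hq j.1 hj))

lemma qZ_measurable (Z : ℕ → ℕ → K → ℝ) (hmeas : ∀ i j, Measurable (Z i j)) (n : ℕ) :
    Measurable fun x => qZ Z x n :=
  innerZ_measurable_aux Z hmeas (fun x => gs_support Z x n) (fun x => gs_support Z x n)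
    (gs_measurable Z hmeas n) (gs_measurable Z hmeas n)

lemma FZ_measurable (Z : ℕ → ℕ → K → ℝ) (hmeas : ∀ i j, Measurable (Z i j)) (N : ℕ) :
    Measurable fun x => FZ Z x N := by
  classical
  have h : (fun x => FZ Z x N) =
      fun x => ∑ i ∈ Finset.range N, if qZ Z x i ≠ 0 then 1 else 0 := by
    funext x
    unfold FZ
    rw [Finset.card_filter]
  rw [h]
  refine Finset.measurable_sum _ fun i _ => Measurable.ite ?_ measurable_const measurable_const
  exact ((qZ_measurable Z hmeas i) (measurableSet_singleton 0)).compl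

lemma measurable_sInf {P : ℕ → K → Prop} (hP : ∀ n, MeasurableSet {x | P n x}) :
    Measurable fun x => sInf {n | P n x} := by
  apply measurable_to_nat
  intro y
  set m := sInf {n | P n y} with hm
  by_cases hm0 : m = 0
  · have hset : (fun x => sInf {n | P n x}) ⁻¹' {m} =
        {x | P 0 x} ∪ ⋂ n, {x | P n x}ᶜ := by
      ext x
      simp only [Set.mem_preimage, Set.mem_singleton_iff, hm0, Set.mem_union, Set.mem_iInter,
        Set.mem_compl_iff, Set.mem_setOf_eq]
      rw [Nat.sInf_eq_zero]
      constructor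
      · rintro (h | h)
        · exact Or.inl h
        · exact Or.inr fun n hn => (Set.eq_empty_iff_forall_notMem.mp h n) hn
      · rintro (h | h)
        · exact Or.inl h
        · exact Or.inr (Set.eq_empty_iff_forall_notMem.mpr h)
    rw [hset]
    exact (hP 0).union (MeasurableSet.iInter fun n => (hP n).compl)
  · have hset : (fun x => sInf {n | P n x}) ⁻¹' {m} =
        {x | P m x} ∩ ⋂ n, ⋂ _ : n < m, {x | P n x}ᶜ := by
      ext x
      simp only [Set.mem_preimage, Set.mem_singleton_iff, Set.mem_inter_iff, Set.mem_iInter,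
        Set.mem_compl_iff, Set.mem_setOf_eq]
      constructor
      · intro h
        have hne : {n | P n x}.Nonempty := by
          by_contra hcon
          rw [Set.not_nonempty_iff_eq_empty] at hcon
          rw [hcon, Nat.sInf_empty] at h
          exact hm0 h.symm
        refine ⟨h ▸ Nat.sInf_mem hne, fun n hn hPn => ?_⟩
        have := Nat.sInf_le (s := {n | P n x}) hPn
        omega
      · rintro ⟨hPm, hmin⟩
        have h1 : sInf {n | P n x} ≤ m := Nat.sInf_le hPm
        have h2 := Nat.sInf_mem (s := {n | P n x}) ⟨m, hPm⟩
        by_contra hne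
        exact hmin _ (lt_of_le_of_ne h1 hne) h2
    rw [hset]
    exact (hP m).inter (MeasurableSet.iInter fun n => MeasurableSet.iInter fun _ => (hP n).compl)

end Measurability

/-- The index of the `k`-th (0-indexed) nonvanishing Gram–Schmidt vector. -/
noncomputable def selZ (Z : ℕ → ℕ → K → ℝ) (x : K) (k : ℕ) : ℕ :=
  sInf {m | qZ Z x m ≠ 0 ∧ FZ Z x m = k}

/-- The `k`-th (0-indexed) normalized Gram–Schmidt vector, or `0` if there is none. -/
noncomputable def gZ (Z : ℕ → ℕ → K → ℝ) (k : ℕ) (x : K) : ℕ →₀ ℝ :=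
  if qZ Z x (selZ Z x k) ≠ 0 ∧ FZ Z x (selZ Z x k) = k then
    (Real.sqrt (qZ Z x (selZ Z x k)))⁻¹ • gs Z x (selZ Z x k)
  else 0

section Measurability2

variable [MeasurableSpace K]

lemma condZ_measurableSet (Z : ℕ → ℕ → K → ℝ) (hmeas : ∀ i j, Measurable (Z i j))
    (m k : ℕ) : MeasurableSet {x : K | qZ Z x m ≠ 0 ∧ FZ Z x m = k} := by
  refine MeasurableSet.inter ?_ ?_
  · exact ((qZ_measurable Z hmeas m) (measurableSet_singleton 0)).compl
  · exact (FZ_measurable Z hmeas m) (measurableSet_singleton k)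

lemma selZ_measurable (Z : ℕ → ℕ → K → ℝ) (hmeas : ∀ i j, Measurable (Z i j)) (k : ℕ) :
    Measurable fun x => selZ Z x k :=
  measurable_sInf fun m => condZ_measurableSet Z hmeas m k

set_option maxHeartbeats 1000000 in
lemma gZ_measurable (Z : ℕ → ℕ → K → ℝ) (hmeas : ∀ i j, Measurable (Z i j)) (k i : ℕ) :
    Measurable fun x => gZ Z k x i := by
  classical
  have hh : ∀ m : ℕ, Measurable fun x : K =>
      (if qZ Z x m ≠ 0 ∧ FZ Z x m = k then
        (Real.sqrt (qZ Z x m))⁻¹ * gs Z x m i else 0) := by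
    intro m
    refine Measurable.ite (condZ_measurableSet Z hmeas m k) ?_ measurable_const
    exact ((Real.continuous_sqrt.measurable.comp (qZ_measurable Z hmeas m)).inv).mul
      (gs_measurable Z hmeas m i)
  have hfun : Measurable fun q : K × ℕ =>
      (if qZ Z q.1 q.2 ≠ 0 ∧ FZ Z q.1 q.2 = k then
        (Real.sqrt (qZ Z q.1 q.2))⁻¹ * gs Z q.1 q.2 i else 0) :=
    measurable_from_prod_countable_left fun m => hh m
  have hcomp : Measurable fun x : K => ((x, selZ Z x k) : K × ℕ) :=
    measurable_id.prodMk (selZ_measurable Z hmeas k)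
  have : (fun x => gZ Z k x i) = fun x : K =>
      (if qZ Z x (selZ Z x k) ≠ 0 ∧ FZ Z x (selZ Z x k) = k then
        (Real.sqrt (qZ Z x (selZ Z x k)))⁻¹ * gs Z x (selZ Z x k) i else 0) := by
    funext x
    unfold gZ
    by_cases h : qZ Z x (selZ Z x k) ≠ 0 ∧ FZ Z x (selZ Z x k) = k
    · rw [if_pos h, if_pos h, Finsupp.smul_apply, smul_eq_mul]
    · rw [if_neg h, if_neg h, Finsupp.coe_zero, Pi.zero_apply]
  rw [this]
  exact hfun.comp hcomp

end Measurability2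

end Stmt17Aux

open Stmt17Aux

/-- Lemma 3.6 of the paper (pointwise form): a measurable field of positive semidefinite
infinite Gram matrices with pointwise rank `p(x) ≤ p` admits a measurable field
`g^{(1)}, …, g^{(p)}` of finitely supported sequences that is orthonormal for
`⟨·,·⟩_{Z(x)}` up to the pointwise index `p(x)` and vanishes (in `Z(x)`-seminorm) beyond it. -/
theorem stmt17 {K : Type*} [MeasurableSpace K] (p : ℕ) (hp : 1 ≤ p)
    (Z : ℕ → ℕ → K → ℝ)
    (hmeas : ∀ i j, Measurable (Z i j))
    (hsymm : ∀ (x : K) (i j : ℕ), Z i j x = Z j i x)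
    (hpsd : ∀ (x : K) (N : ℕ), (Matrix.of fun i j : Fin N => Z i j x).PosSemidef)
    (hrank : ∀ (x : K) (N : ℕ), (Matrix.of fun i j : Fin N => Z i j x).rank ≤ p) :
    ∃ g : Fin p → K → (ℕ →₀ ℝ),
      (∀ (k : Fin p) (i : ℕ), Measurable fun x => g k x i) ∧
      (∀ (x : K) (k l : Fin p), k ≠ l → innerZ Z x (g k x) (g l x) = 0) ∧
      (∀ (x : K) (k : Fin p),
        innerZ Z x (g k x) (g k x) =
          if (k : ℕ) <
              sSup {n : ℕ | ∃ N : ℕ, n = (Matrix.of fun i j : Fin N => Z i j x).rank}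
          then 1 else 0) := by
  classical
  refine ⟨fun k x => gZ Z k.1 x, ?_, ?_, ?_⟩
  · intro k i
    exact gZ_measurable Z hmeas k.1 i
  · intro x k l hkl
    show innerZ Z x (gZ Z k.1 x) (gZ Z l.1 x) = 0
    have hs := hsymm x
    by_cases hk : qZ Z x (selZ Z x k.1) ≠ 0 ∧ FZ Z x (selZ Z x k.1) = k.1
    swap
    · rw [show gZ Z k.1 x = 0 from if_neg hk, innerZ_zero_left]
    by_cases hl : qZ Z x (selZ Z x l.1) ≠ 0 ∧ FZ Z x (selZ Z x l.1) = l.1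
    swap
    · rw [show gZ Z l.1 x = 0 from if_neg hl, innerZ_zero_right]
    rw [show gZ Z k.1 x = (Real.sqrt (qZ Z x (selZ Z x k.1)))⁻¹ • gs Z x (selZ Z x k.1)
        from if_pos hk,
      show gZ Z l.1 x = (Real.sqrt (qZ Z x (selZ Z x l.1)))⁻¹ • gs Z x (selZ Z x l.1)
        from if_pos hl,
      innerZ_smul_left, innerZ_smul_right Z x hs]
    have hne : selZ Z x k.1 ≠ selZ Z x l.1 := by
      intro h
      exact hkl (Fin.ext (by rw [← hk.2, ← hl.2, h]))
    rcases lt_or_gt_of_ne hne with h | h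
    · rw [innerZ_comm Z x hs (gs Z x (selZ Z x k.1)) (gs Z x (selZ Z x l.1)),
        gs_orth Z x hs (hpsd x) _ _ h]
      ring
    · rw [gs_orth Z x hs (hpsd x) _ _ h]
      ring
  · intro x k
    show innerZ Z x (gZ Z k.1 x) (gZ Z k.1 x) = _
    have hs := hsymm x
    have hSrw : {n : ℕ | ∃ N : ℕ, n = (Matrix.of fun i j : Fin N => Z i j x).rank} =
        {n : ℕ | ∃ N : ℕ, n = FZ Z x N} := by
      ext n
      simp only [Set.mem_setOf_eq]
      constructor
      · rintro ⟨N, rfl⟩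
        exact ⟨N, by rw [rank_eq Z x hs (hpsd x) N]⟩
      · rintro ⟨N, rfl⟩
        exact ⟨N, (rank_eq Z x hs (hpsd x) N).symm⟩
    have hbdd : BddAbove {n : ℕ | ∃ N : ℕ, n = FZ Z x N} := by
      refine ⟨p, ?_⟩
      rintro n ⟨N, rfl⟩
      rw [← rank_eq Z x hs (hpsd x) N]
      exact hrank x N
    have hne0 : {n : ℕ | ∃ N : ℕ, n = FZ Z x N}.Nonempty := ⟨FZ Z x 0, 0, rfl⟩
    rw [hSrw]
    by_cases hk : qZ Z x (selZ Z x k.1) ≠ 0 ∧ FZ Z x (selZ Z x k.1) = k.1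
    · have hmem : (k : ℕ) + 1 ∈ {n : ℕ | ∃ N : ℕ, n = FZ Z x N} :=
        ⟨selZ Z x k.1 + 1, by rw [FZ_succ, if_pos hk.1, hk.2]⟩
      have hlt : (k : ℕ) < sSup {n : ℕ | ∃ N : ℕ, n = FZ Z x N} := by
        have := le_csSup hbdd hmem
        omega
      rw [if_pos hlt,
        show gZ Z k.1 x = (Real.sqrt (qZ Z x (selZ Z x k.1)))⁻¹ • gs Z x (selZ Z x k.1)
          from if_pos hk,
        innerZ_smul_left, innerZ_smul_right Z x hs]
      have hq0 : 0 ≤ qZ Z x (selZ Z x k.1) := innerZ_self_nonneg Z x (hpsd x) _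
      rw [show innerZ Z x (gs Z x (selZ Z x k.1)) (gs Z x (selZ Z x k.1)) =
          qZ Z x (selZ Z x k.1) from rfl,
        ← mul_assoc, ← mul_inv, Real.mul_self_sqrt hq0, inv_mul_cancel₀ hk.1]
    · have hge : sSup {n : ℕ | ∃ N : ℕ, n = FZ Z x N} ≤ (k : ℕ) := by
        by_contra hlt
        push_neg at hlt
        obtain ⟨N₀, hN₀⟩ := Nat.sSup_mem hne0 hbdd
        have hkF : (k : ℕ) < FZ Z x N₀ := by rw [← hN₀]; exact hlt
        obtain ⟨m, hm⟩ := exists_FZ_eq Z x k.1 N₀ hkF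
        exact hk (Nat.sInf_mem (⟨m, hm⟩ : Set.Nonempty {m | qZ Z x m ≠ 0 ∧ FZ Z x m = k.1}))
      rw [if_neg (by omega), show gZ Z k.1 x = 0 from if_neg hk, innerZ_zero_left]
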